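/- arXiv:2601.01164 — 2 statements merged into one kernel-verified Lean document; each statement's English description precedes it below -/
import Mathlib

section
/- Let F be one of the graphs P_4, 2P_2, C_3, and let n ≥ 5. If G maximizes the Q-index among all connected F-free outerplanar graphs of order n, then G is isomorphic to the star K_{1,n−1}. -/
open scoped Classical

namespace OuterplanarQ

/-- Signless Laplacian matrix Q(G) = D(G) + A(G). -/
noncomputable def qMatrix {V : Type*} [Fintype V] (G : SimpleGraph V) : Matrix V V ℝ :=
  fun i j => (if i = j then (G.degree i : ℝ) else 0) + (if G.Adj i j then 1 else 0)

/-- The Q-index: the largest eigenvalue of Q(G). -/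
noncomputable def qIndex {V : Type*} [Fintype V] (G : SimpleGraph V) : ℝ :=
  sSup {μ : ℝ | ∃ x : V → ℝ, x ≠ 0 ∧ (qMatrix G).mulVec x = μ • x}

/-- Outerplanar: one-page book embedding characterization, i.e. the vertices admit a
linear ordering (injection into ℝ) such that no two edges interleave. -/
def IsOuterplanar {V : Type*} (G : SimpleGraph V) : Prop :=
  ∃ f : V → ℝ, Function.Injective f ∧
    ∀ a b c d : V, G.Adj a b → G.Adj c d →
      ¬ (f a < f c ∧ f c < f b ∧ f b < f d)

/-- `G` contains a copy of `F` as a subgraph. -/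
def ContainsCopy {α β : Type*} (G : SimpleGraph α) (F : SimpleGraph β) : Prop :=
  ∃ f : β → α, Function.Injective f ∧ ∀ a b : β, F.Adj a b → G.Adj (f a) (f b)

/-- Disjoint union of `t` copies of the path on `k` vertices. -/
def pathUnion (t k : ℕ) : SimpleGraph (Fin t × Fin k) where
  Adj a b := a.1 = b.1 ∧ (SimpleGraph.pathGraph k).Adj a.2 b.2
  symm := ⟨fun _ _ h => ⟨h.1.symm, h.2.symm⟩⟩
  loopless := ⟨fun _ h => (SimpleGraph.pathGraph k).irrefl h.2⟩

/-- Disjoint union of two graphs. -/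
def disjSum {α β : Type*} (G : SimpleGraph α) (H : SimpleGraph β) : SimpleGraph (α ⊕ β) where
  Adj a b := match a, b with
    | Sum.inl x, Sum.inl y => G.Adj x y
    | Sum.inr x, Sum.inr y => H.Adj x y
    | _, _ => False
  symm := by constructor; rintro (x|x) (y|y) h <;> simp_all <;> exact h.symm
  loopless := by constructor; rintro (x|x) h <;> simp_all

/-- The join `K₁ ∨ H` of a single vertex with `H`. -/
def cone {V : Type*} (H : SimpleGraph V) : SimpleGraph (Option V) where
  Adj a b := match a, b with
    | none, none => False
    | none, some _ => True
    | some _, none => True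
    | some x, some y => H.Adj x y
  symm := by constructor; rintro (_|x) (_|y) h <;> simp_all <;> exact h.symm
  loopless := by constructor; rintro (_|x) h <;> simp_all

/-- A disjoint union of paths: acyclic with maximum degree at most 2. -/
def IsLinearForest {V : Type*} [Fintype V] (G : SimpleGraph V) : Prop :=
  G.IsAcyclic ∧ ∀ v : V, G.degree v ≤ 2

/-- The closed neighbourhood `N[u]`. -/
def closedNbhd {V : Type*} (G : SimpleGraph V) (u : V) : Set V :=
  insert u (G.neighborSet u)

/-- The graph obtained from `G` by adding the edge `uv`. -/
def addEdge {V : Type*} (G : SimpleGraph V) (u v : V) : SimpleGraph V :=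
  G ⊔ SimpleGraph.fromEdgeSet {s(u, v)}

/-- The graph obtained from `G` by deleting the edge `uv`. -/
def delEdge {V : Type*} (G : SimpleGraph V) (u v : V) : SimpleGraph V :=
  G.deleteEdges {s(u, v)}

/-- η(u) = d(u) + (1/d(u)) · Σ_{v ∈ N(u)} d(v). -/
noncomputable def eta {V : Type*} [Fintype V] (G : SimpleGraph V) (u : V) : ℝ :=
  (G.degree u : ℝ) + (1 / (G.degree u : ℝ)) * ∑ v ∈ G.neighborFinset u, (G.degree v : ℝ)

section Spectral
variable {V : Type*} [Fintype V]

lemma eig_le_of_rowsum_le (M : Matrix V V ℝ) (hM : ∀ i j, 0 ≤ M i j)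
    {x : V → ℝ} (hx : x ≠ 0) {μ : ℝ} (h : M.mulVec x = μ • x)
    {C : ℝ} (hC : ∀ i, ∑ j, M i j ≤ C) : μ ≤ C := by
  obtain ⟨j0, hj0⟩ : ∃ j, x j ≠ 0 := Function.ne_iff.mp hx
  obtain ⟨i, -, hi⟩ := Finset.exists_max_image Finset.univ (fun i => |x i|)
    ⟨j0, Finset.mem_univ _⟩
  have hxi : 0 < |x i| := lt_of_lt_of_le (abs_pos.mpr hj0) (hi j0 (Finset.mem_univ _))
  have h1 : ∑ j, M i j * x j = μ * x i := by
    simpa [Matrix.mulVec, dotProduct] using congrFun h i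
  have h2 : |μ| * |x i| ≤ C * |x i| := by
    calc |μ| * |x i| = |μ * x i| := (abs_mul μ (x i)).symm
    _ = |∑ j, M i j * x j| := by rw [h1]
    _ ≤ ∑ j, |M i j * x j| := Finset.abs_sum_le_sum_abs _ _
    _ ≤ ∑ j, M i j * |x i| := by
        refine Finset.sum_le_sum fun j _ => ?_
        rw [abs_mul, abs_of_nonneg (hM i j)]
        exact mul_le_mul_of_nonneg_left (hi j (Finset.mem_univ _)) (hM i j)
    _ = (∑ j, M i j) * |x i| := by rw [Finset.sum_mul]
    _ ≤ C * |x i| := mul_le_mul_of_nonneg_right (hC i) (abs_nonneg _)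
  exact le_trans (le_abs_self μ) (le_of_mul_le_mul_right h2 hxi)

lemma qMatrix_nonneg (G : SimpleGraph V) (i j : V) : 0 ≤ qMatrix G i j := by
  unfold qMatrix
  split_ifs <;> positivity

lemma sum_ite_adj (G : SimpleGraph V) (i : V) (g : V → ℝ) :
    ∑ j, (if G.Adj i j then (1:ℝ) else 0) * g j = ∑ j ∈ G.neighborFinset i, g j := by
  rw [SimpleGraph.neighborFinset_eq_filter, Finset.sum_filter]
  exact Finset.sum_congr rfl fun j _ => by split_ifs <;> simp

lemma qMatrix_rowsum (G : SimpleGraph V) (i : V) :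
    ∑ j, qMatrix G i j = 2 * (G.degree i : ℝ) := by
  unfold qMatrix
  rw [Finset.sum_add_distrib]
  have h1 : ∑ j, (if i = j then (G.degree i : ℝ) else 0) = (G.degree i : ℝ) := by
    simp
  have h2 : ∑ j : V, (if G.Adj i j then (1:ℝ) else 0) = (G.degree i : ℝ) := by
    have := sum_ite_adj G i (fun _ => (1:ℝ))
    simp only [mul_one] at this
    rw [this, Finset.sum_const, nsmul_eq_mul, mul_one]
    rfl
  rw [h1, h2]; ring

lemma qMatrix_mulVec (G : SimpleGraph V) (x : V → ℝ) (i : V) :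
    (qMatrix G).mulVec x i = (G.degree i : ℝ) * x i + ∑ j ∈ G.neighborFinset i, x j := by
  have : (qMatrix G).mulVec x i = ∑ j, qMatrix G i j * x j := by
    simp [Matrix.mulVec, dotProduct]
  rw [this]
  unfold qMatrix
  have : ∀ j, ((if i = j then (G.degree i : ℝ) else 0) + (if G.Adj i j then 1 else 0)) * x j
      = (if i = j then (G.degree i : ℝ) * x j else 0) + (if G.Adj i j then (1:ℝ) else 0) * x j := by
    intro j; split_ifs <;> ring
  rw [Finset.sum_congr rfl fun j _ => this j, Finset.sum_add_distrib,
    Finset.sum_ite_eq Finset.univ i (fun j => (G.degree i : ℝ) * x j), sum_ite_adj]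
  simp

lemma qIndex_bddAbove (G : SimpleGraph V) :
    BddAbove {μ : ℝ | ∃ x : V → ℝ, x ≠ 0 ∧ (qMatrix G).mulVec x = μ • x} := by
  refine ⟨2 * Fintype.card V, ?_⟩
  rintro μ ⟨x, hx, hμ⟩
  refine eig_le_of_rowsum_le _ (qMatrix_nonneg G) hx hμ fun i => ?_
  rw [qMatrix_rowsum]
  have := G.degree_lt_card_verts i
  have h2 : (G.degree i : ℝ) ≤ (Fintype.card V : ℝ) := by exact_mod_cast this.le
  nlinarith [h2]

lemma eta_nonneg (G : SimpleGraph V) (u : V) : 0 ≤ eta G u := by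
  unfold eta
  have : (0:ℝ) ≤ ∑ v ∈ G.neighborFinset u, (G.degree v : ℝ) :=
    Finset.sum_nonneg fun v _ => by positivity
  positivity

lemma eig_le_eta (G : SimpleGraph V) (hdeg : ∀ v, 0 < G.degree v)
    {x : V → ℝ} (hx : x ≠ 0) {μ : ℝ} (h : (qMatrix G).mulVec x = μ • x)
    {C : ℝ} (hC : ∀ u, eta G u ≤ C) : μ ≤ C := by
  have hdR : ∀ v : V, (0:ℝ) < (G.degree v : ℝ) := fun v => by exact_mod_cast hdeg v
  set M : Matrix V V ℝ := fun i j => qMatrix G i j * (G.degree j : ℝ) / (G.degree i : ℝ)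
    with hMdef
  set y : V → ℝ := fun j => x j / (G.degree j : ℝ) with hydef
  have hy0 : y ≠ 0 := by
    obtain ⟨j, hj⟩ := Function.ne_iff.mp hx
    exact Function.ne_iff.mpr ⟨j, div_ne_zero hj (hdR j).ne'⟩
  have hMeig : M.mulVec y = μ • y := by
    funext i
    have h1 : ∑ j, qMatrix G i j * x j = μ * x i := by
      simpa [Matrix.mulVec, dotProduct] using congrFun h i
    have h2 : M.mulVec y i = ∑ j, qMatrix G i j * x j / (G.degree i : ℝ) := by
      simp only [Matrix.mulVec, dotProduct, hMdef, hydef]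
      refine Finset.sum_congr rfl fun j _ => ?_
      have hdj := (hdR j).ne'
      have hdi := (hdR i).ne'
      field_simp
    rw [h2, ← Finset.sum_div, h1]
    simp only [Pi.smul_apply, hydef, smul_eq_mul]
    ring
  refine eig_le_of_rowsum_le M ?_ hy0 hMeig fun i => ?_
  · intro i j
    exact div_nonneg (mul_nonneg (qMatrix_nonneg G i j) (hdR j).le) (hdR i).le
  · have hrow : ∑ j, M i j = eta G i := by
      simp only [hMdef]
      rw [← Finset.sum_div]
      have hnum : ∑ j, qMatrix G i j * (G.degree j : ℝ)
          = (G.degree i : ℝ) * (G.degree i : ℝ)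
            + ∑ v ∈ G.neighborFinset i, (G.degree v : ℝ) := by
        unfold qMatrix
        have : ∀ j, ((if i = j then (G.degree i : ℝ) else 0) + (if G.Adj i j then 1 else 0))
              * (G.degree j : ℝ)
            = (if i = j then (G.degree i : ℝ) * (G.degree j : ℝ) else 0)
              + (if G.Adj i j then (1:ℝ) else 0) * (G.degree j : ℝ) := by
          intro j; split_ifs <;> ring
        rw [Finset.sum_congr rfl fun j _ => this j, Finset.sum_add_distrib,
          Finset.sum_ite_eq Finset.univ i (fun j => (G.degree i : ℝ) * (G.degree j : ℝ)),
          sum_ite_adj]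
        simp
      rw [hnum]
      unfold eta
      have hdi := (hdR i).ne'
      field_simp
    rw [hrow]; exact hC i

end Spectral

section Star
variable {V : Type*}

def starG (u : V) : SimpleGraph V where
  Adj a b := (a = u ∨ b = u) ∧ a ≠ b
  symm := ⟨fun a b h => ⟨h.1.symm, h.2.symm⟩⟩
  loopless := ⟨fun a h => h.2 rfl⟩

lemma starG_adj {u a b : V} : (starG u).Adj a b ↔ (a = u ∨ b = u) ∧ a ≠ b := Iff.rfl

lemma starG_triangle_free {u : V} (a b c : V)
    (h1 : (starG u).Adj a b) (h2 : (starG u).Adj b c) (h3 : (starG u).Adj a c) : False := by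
  rw [starG_adj] at h1 h2 h3
  obtain ⟨x1, n1⟩ := h1; obtain ⟨x2, n2⟩ := h2; obtain ⟨x3, n3⟩ := h3
  rcases x1 with h | h <;> rcases x2 with h' | h' <;> rcases x3 with h'' | h'' <;>
    subst_vars <;> simp_all

lemma starG_connected [Fintype V] [Nonempty V] (u : V) : (starG u).Connected := by
  rw [SimpleGraph.connected_iff]
  refine ⟨?_, ⟨u⟩⟩
  have key : ∀ w, (starG u).Reachable u w := fun w => by
    by_cases h : w = u
    · subst h; exact SimpleGraph.Reachable.refl _
    · exact SimpleGraph.Adj.reachable ⟨Or.inl rfl, Ne.symm h⟩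
  intro a b
  exact (key a).symm.trans (key b)

lemma starG_outerplanar [Fintype V] (u : V) : IsOuterplanar (starG u) := by
  refine ⟨fun v => ((Fintype.equivFin V v : ℕ) : ℝ), ?_, ?_⟩
  · intro a b h
    simp only at h
    exact (Fintype.equivFin V).injective (Fin.ext (by exact_mod_cast h))
  · rintro a b c d hab hcd ⟨h1, h2, h3⟩
    set f : V → ℝ := fun v => ((Fintype.equivFin V v : ℕ) : ℝ)
    rcases hab.1 with ha | hb <;> rcases hcd.1 with hc | hd
    · subst ha; subst hc; exact lt_irrefl _ h1
    · subst ha; subst hd; linarith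
    · subst hb; subst hc; linarith
    · subst hb; subst hd; linarith

lemma starG_nf_center [Fintype V] (u : V) :
    (starG u).neighborFinset u = Finset.univ.erase u := by
  ext v
  simp only [SimpleGraph.mem_neighborFinset, starG_adj, Finset.mem_erase, Finset.mem_univ,
    and_true]
  constructor
  · rintro ⟨-, h⟩; exact Ne.symm h
  · intro h; exact ⟨by simp, Ne.symm h⟩

lemma starG_nf_leaf [Fintype V] {u v : V} (h : v ≠ u) :
    (starG u).neighborFinset v = {u} := by
  ext w
  simp only [SimpleGraph.mem_neighborFinset, starG_adj, Finset.mem_singleton]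
  constructor
  · rintro ⟨hvu | hwu, hne⟩
    · exact absurd hvu h
    · exact hwu
  · rintro rfl; exact ⟨Or.inr rfl, h⟩

lemma starG_degree_center [Fintype V] (u : V) :
    (starG u).degree u = Fintype.card V - 1 := by
  rw [← SimpleGraph.card_neighborFinset_eq_degree, starG_nf_center,
    Finset.card_erase_of_mem (Finset.mem_univ u), Finset.card_univ]

lemma starG_degree_leaf [Fintype V] {u v : V} (h : v ≠ u) :
    (starG u).degree v = 1 := by
  rw [← SimpleGraph.card_neighborFinset_eq_degree, starG_nf_leaf h, Finset.card_singleton]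

lemma starG_qIndex_ge [Fintype V] (u : V) (h5 : 5 ≤ Fintype.card V) :
    (Fintype.card V : ℝ) ≤ qIndex (starG u) := by
  have h1 : 1 ≤ Fintype.card V := by omega
  have hcast : ((Fintype.card V - 1 : ℕ) : ℝ) = (Fintype.card V : ℝ) - 1 := by
    push_cast [h1]
    ring
  refine le_csSup (qIndex_bddAbove _) ?_
  refine ⟨fun v => if v = u then ((Fintype.card V : ℝ) - 1) else 1, ?_, ?_⟩
  · intro hzero
    have h0 := congrFun hzero u
    simp only [Pi.zero_apply, if_pos rfl, eq_self_iff_true, if_true] at h0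
    have : (5:ℝ) ≤ (Fintype.card V : ℝ) := by exact_mod_cast h5
    linarith
  · funext i
    rw [qMatrix_mulVec]
    simp only [Pi.smul_apply, smul_eq_mul]
    by_cases hi : i = u
    · subst hi
      rw [starG_nf_center, starG_degree_center, hcast]
      have hsum : ∑ j ∈ Finset.univ.erase i, (if j = i then ((Fintype.card V:ℝ) - 1) else 1)
          = ((Finset.univ.erase i).card : ℝ) := by
        rw [Finset.sum_congr rfl (fun j hj => if_neg (Finset.mem_erase.mp hj).1)]
        simp
      rw [if_pos rfl, hsum, Finset.card_erase_of_mem (Finset.mem_univ i), Finset.card_univ,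
        hcast]
      ring
    · rw [starG_nf_leaf hi, starG_degree_leaf hi, if_neg hi]
      rw [Finset.sum_singleton, if_pos rfl]
      push_cast
      ring

end Star

section K23
variable {V : Type*} {G : SimpleGraph V}

private lemma K23aux {f : V → ℝ}
    (hcross : ∀ a b c d : V, G.Adj a b → G.Adj c d →
      ¬ (f a < f c ∧ f c < f b ∧ f b < f d))
    (finj : Function.Injective f)
    {v1 v2 w1 w2 w3 : V} (hv : f v1 < f v2)
    (h12 : w1 ≠ w2) (h13 : w1 ≠ w3) (h23 : w2 ≠ w3)
    (a11 : G.Adj v1 w1) (a12 : G.Adj v1 w2) (a13 : G.Adj v1 w3)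
    (a21 : G.Adj v2 w1) (a22 : G.Adj v2 w2) (a23 : G.Adj v2 w3) : False := by
  -- helpers: two w's in same region, or one left one right
  have pL : ∀ {w w' : V}, w ≠ w' → G.Adj v1 w → G.Adj v2 w → G.Adj v1 w' → G.Adj v2 w' →
      f w < f v1 → f w' < f v1 → False := by
    intro w w' hne b1 b2 c1 c2 hw hw'
    rcases lt_trichotomy (f w) (f w') with h | h | h
    · exact hcross w v1 w' v2 b1.symm c2.symm ⟨h, hw', hv⟩
    · exact hne (finj h)
    · exact hcross w' v1 w v2 c1.symm b2.symm ⟨h, hw, hv⟩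
  have pM : ∀ {w w' : V}, w ≠ w' → G.Adj v1 w → G.Adj v2 w → G.Adj v1 w' → G.Adj v2 w' →
      f v1 < f w → f w < f v2 → f v1 < f w' → f w' < f v2 → False := by
    intro w w' hne b1 b2 c1 c2 hw1 hw2 hw1' hw2'
    rcases lt_trichotomy (f w) (f w') with h | h | h
    · exact hcross v1 w' w v2 c1 b2.symm ⟨hw1, h, hw2'⟩
    · exact hne (finj h)
    · exact hcross v1 w w' v2 b1 c2.symm ⟨hw1', h, hw2⟩
  have pR : ∀ {w w' : V}, w ≠ w' → G.Adj v1 w → G.Adj v2 w → G.Adj v1 w' → G.Adj v2 w' →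
      f v2 < f w → f v2 < f w' → False := by
    intro w w' hne b1 b2 c1 c2 hw hw'
    rcases lt_trichotomy (f w) (f w') with h | h | h
    · exact hcross v1 w v2 w' b1 c2 ⟨hv, hw, h⟩
    · exact hne (finj h)
    · exact hcross v1 w' v2 w c1 b2 ⟨hv, hw', h⟩
  have pLR : ∀ {w w' : V}, G.Adj v1 w → G.Adj v2 w → G.Adj v1 w' → G.Adj v2 w' →
      f w < f v1 → f v2 < f w' → False := by
    intro w w' b1 b2 c1 c2 hw hw'
    exact hcross w v2 v1 w' b2.symm c1 ⟨hw, hv, hw'⟩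
  -- region classification
  have reg : ∀ w : V, G.Adj v1 w → G.Adj v2 w →
      f w < f v1 ∨ (f v1 < f w ∧ f w < f v2) ∨ f v2 < f w := by
    intro w b1 b2
    rcases lt_trichotomy (f w) (f v1) with h | h | h
    · exact Or.inl h
    · exact absurd (finj h) b1.ne'
    · rcases lt_trichotomy (f w) (f v2) with h' | h' | h'
      · exact Or.inr (Or.inl ⟨h, h'⟩)
      · exact absurd (finj h') b2.ne'
      · exact Or.inr (Or.inr h')
  rcases reg w1 a11 a21 with r1 | ⟨r1a, r1b⟩ | r1 <;>
    rcases reg w2 a12 a22 with r2 | ⟨r2a, r2b⟩ | r2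
  · exact pL h12 a11 a21 a12 a22 r1 r2
  · -- w1 L, w2 M
    rcases reg w3 a13 a23 with r3 | ⟨r3a, r3b⟩ | r3
    · exact pL h13 a11 a21 a13 a23 r1 r3
    · exact pM h23 a12 a22 a13 a23 r2a r2b r3a r3b
    · exact pLR a11 a21 a13 a23 r1 r3
  · exact pLR a11 a21 a12 a22 r1 r2
  · rcases reg w3 a13 a23 with r3 | ⟨r3a, r3b⟩ | r3
    · exact pL h23 a12 a22 a13 a23 r2 r3
    · exact pM h13 a11 a21 a13 a23 r1a r1b r3a r3b
    · exact pLR a12 a22 a13 a23 r2 r3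
  · exact pM h12 a11 a21 a12 a22 r1a r1b r2a r2b
  · rcases reg w3 a13 a23 with r3 | ⟨r3a, r3b⟩ | r3
    · exact pLR a13 a23 a12 a22 r3 r2
    · exact pM h13 a11 a21 a13 a23 r1a r1b r3a r3b
    · exact pR h23 a12 a22 a13 a23 r2 r3
  · exact pLR a12 a22 a11 a21 r2 r1
  · rcases reg w3 a13 a23 with r3 | ⟨r3a, r3b⟩ | r3
    · exact pLR a13 a23 a11 a21 r3 r1
    · exact pM h23 a12 a22 a13 a23 r2a r2b r3a r3b
    · exact pR h13 a11 a21 a13 a23 r1 r3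
  · exact pR h12 a11 a21 a12 a22 r1 r2

lemma no_K23_of_outerplanar (hout : IsOuterplanar G)
    {v1 v2 w1 w2 w3 : V} (hv : v1 ≠ v2)
    (h12 : w1 ≠ w2) (h13 : w1 ≠ w3) (h23 : w2 ≠ w3)
    (a11 : G.Adj v1 w1) (a12 : G.Adj v1 w2) (a13 : G.Adj v1 w3)
    (a21 : G.Adj v2 w1) (a22 : G.Adj v2 w2) (a23 : G.Adj v2 w3) : False := by
  obtain ⟨f, finj, hcross⟩ := hout
  rcases lt_trichotomy (f v1) (f v2) with h | h | h
  · exact K23aux hcross finj h h12 h13 h23 a11 a12 a13 a21 a22 a23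
  · exact hv (finj h)
  · exact K23aux hcross finj h h12 h13 h23 a21 a22 a23 a11 a12 a13

end K23

section Eta
variable {V : Type*} [Fintype V]

lemma three_distinct {s : Finset V} (h : 3 ≤ s.card) :
    ∃ a b c : V, a ∈ s ∧ b ∈ s ∧ c ∈ s ∧ a ≠ b ∧ a ≠ c ∧ b ≠ c := by
  obtain ⟨a, ha⟩ := Finset.card_pos.mp (show 0 < s.card by omega)
  have h2 : 0 < (s.erase a).card := by
    rw [Finset.card_erase_of_mem ha]; omega
  obtain ⟨b, hb⟩ := Finset.card_pos.mp h2
  have hbs := Finset.mem_erase.mp hb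
  have h1 : 0 < ((s.erase a).erase b).card := by
    rw [Finset.card_erase_of_mem hb, Finset.card_erase_of_mem ha]; omega
  obtain ⟨c, hc⟩ := Finset.card_pos.mp h1
  have hcs := Finset.mem_erase.mp hc
  have hcs' := Finset.mem_erase.mp hcs.2
  exact ⟨a, b, c, ha, hbs.2, hcs'.2, Ne.symm hbs.1, Ne.symm hcs'.1, Ne.symm hcs.1⟩

lemma eta_lt_card {n : ℕ} (G : SimpleGraph V) (hcard : Fintype.card V = n) (hn : 5 ≤ n)
    (htf : ∀ a b c : V, G.Adj a b → G.Adj b c → G.Adj a c → False)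
    (hK23 : ∀ v1 v2 w1 w2 w3 : V, v1 ≠ v2 → w1 ≠ w2 → w1 ≠ w3 → w2 ≠ w3 →
      G.Adj v1 w1 → G.Adj v1 w2 → G.Adj v1 w3 →
      G.Adj v2 w1 → G.Adj v2 w2 → G.Adj v2 w3 → False)
    (hΔ : ∀ v, G.degree v ≤ n - 2) (u : V) : eta G u < n := by
  have hn0 : (0:ℝ) < (n:ℝ) := by exact_mod_cast (by omega : 0 < n)
  by_cases hd0 : G.degree u = 0
  · have hnf : G.neighborFinset u = ∅ := by
      have : (G.neighborFinset u).card = 0 := by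
        rw [SimpleGraph.card_neighborFinset_eq_degree]; exact hd0
      exact Finset.card_eq_zero.mp this
    rw [eta, hd0, hnf]
    simpa using hn0
  · set d : ℕ := G.degree u with hd
    set Nu : Finset V := G.neighborFinset u with hNu
    set S : ℕ := ∑ v ∈ Nu, G.degree v with hS
    have hNucard : Nu.card = d := G.card_neighborFinset_eq_degree u
    have hd1 : 1 ≤ d := Nat.one_le_iff_ne_zero.mpr hd0
    have hdn2 : d ≤ n - 2 := hΔ u
    set R : Finset V := Finset.univ \ insert u Nu with hR
    set r : ℕ := R.card with hr
    have hins : (insert u Nu).card = d + 1 := by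
      rw [Finset.card_insert_of_notMem (G.notMem_neighborFinset_self u), hNucard]
    have hrn : r = n - (d + 1) := by
      rw [hr, hR, Finset.card_sdiff_of_subset (Finset.subset_univ _), Finset.card_univ, hcard, hins]
    have hnrd : n = d + 1 + r := by omega
    have hr1 : 1 ≤ r := by omega
    have hRu : ∀ w ∈ R, w ≠ u ∧ w ∉ Nu := by
      intro w hw
      rw [hR] at hw
      simp only [Finset.mem_sdiff, Finset.mem_univ, true_and, Finset.mem_insert] at hw
      push_neg at hw
      exact hw
    -- per-w bound
    have hw2 : ∀ w ∈ R, (G.neighborFinset w ∩ Nu).card ≤ 2 := by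
      intro w hwR
      by_contra hc
      push_neg at hc
      obtain ⟨c1, c2, c3, hc1, hc2, hc3, h12, h13, h23⟩ := three_distinct (s := G.neighborFinset w ∩ Nu) (by omega)
      have hwu : u ≠ w := Ne.symm (hRu w hwR).1
      have adj_u : ∀ c ∈ G.neighborFinset w ∩ Nu, G.Adj u c := fun c hcm => by
        have := (Finset.mem_inter.mp hcm).2
        rwa [hNu, SimpleGraph.mem_neighborFinset] at this
      have adj_w : ∀ c ∈ G.neighborFinset w ∩ Nu, G.Adj w c := fun c hcm => by
        have := (Finset.mem_inter.mp hcm).1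
        rwa [SimpleGraph.mem_neighborFinset] at this
      exact hK23 u w c1 c2 c3 hwu h12 h13 h23 (adj_u c1 hc1) (adj_u c2 hc2) (adj_u c3 hc3)
        (adj_w c1 hc1) (adj_w c2 hc2) (adj_w c3 hc3)
    set e : ℕ := ∑ w ∈ R, (G.neighborFinset w ∩ Nu).card with he
    have hele : e ≤ 2 * r := by
      calc e ≤ ∑ _w ∈ R, 2 := Finset.sum_le_sum hw2
      _ = 2 * r := by rw [Finset.sum_const, smul_eq_mul, hr]; ring
    -- S bound
    have hswap : ∑ v ∈ Nu, (G.neighborFinset v ∩ R).card = e := by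
      have h1 : ∀ v, G.neighborFinset v ∩ R = R.filter (fun w => G.Adj v w) := by
        intro v; ext w
        simp [SimpleGraph.mem_neighborFinset, and_comm]
      have h2 : ∀ w, G.neighborFinset w ∩ Nu = Nu.filter (fun v => G.Adj v w) := by
        intro w; ext v
        simp [SimpleGraph.mem_neighborFinset, and_comm, SimpleGraph.adj_comm]
      calc ∑ v ∈ Nu, (G.neighborFinset v ∩ R).card
          = ∑ v ∈ Nu, ∑ w ∈ R, (if G.Adj v w then 1 else 0) := by
            refine Finset.sum_congr rfl fun v _ => ?_
            rw [h1 v, Finset.card_filter]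
      _ = ∑ w ∈ R, ∑ v ∈ Nu, (if G.Adj v w then 1 else 0) := Finset.sum_comm
      _ = e := by
            rw [he]
            refine Finset.sum_congr rfl fun w _ => ?_
            rw [h2 w, Finset.card_filter]
    have hSle : S ≤ d + e := by
      have hsub : ∀ v ∈ Nu, G.degree v ≤ 1 + (G.neighborFinset v ∩ R).card := by
        intro v hv
        have hAdjuv : G.Adj u v := by rwa [hNu, SimpleGraph.mem_neighborFinset] at hv
        have hss : G.neighborFinset v ⊆ insert u (G.neighborFinset v ∩ R) := by
          intro w hw
          have hAdjvw : G.Adj v w := by rwa [SimpleGraph.mem_neighborFinset] at hw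
          rcases eq_or_ne w u with rfl | hwu
          · exact Finset.mem_insert_self _ _
          · refine Finset.mem_insert_of_mem (Finset.mem_inter.mpr ⟨hw, ?_⟩)
            rw [hR]
            simp only [Finset.mem_sdiff, Finset.mem_univ, true_and, Finset.mem_insert]
            push_neg
            refine ⟨hwu, fun hwNu => ?_⟩
            have hAdjuw : G.Adj u w := by rwa [hNu, SimpleGraph.mem_neighborFinset] at hwNu
            exact htf u v w hAdjuv hAdjvw hAdjuw
        calc G.degree v = (G.neighborFinset v).card :=
              (G.card_neighborFinset_eq_degree v).symm
        _ ≤ (insert u (G.neighborFinset v ∩ R)).card := Finset.card_le_card hss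
        _ ≤ (G.neighborFinset v ∩ R).card + 1 := Finset.card_insert_le _ _
        _ = 1 + (G.neighborFinset v ∩ R).card := by ring
      calc S ≤ ∑ v ∈ Nu, (1 + (G.neighborFinset v ∩ R).card) := Finset.sum_le_sum hsub
      _ = Nu.card + ∑ v ∈ Nu, (G.neighborFinset v ∩ R).card := by
            rw [Finset.sum_add_distrib, Finset.sum_const, smul_eq_mul, mul_one]
      _ = d + e := by rw [hNucard, hswap]
    -- key inequality
    have key : d * d + S < n * d := by
      rcases (by omega : d = 1 ∨ d = 2 ∨ 3 ≤ d) with hd' | hd' | hd'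
      · -- d = 1
        obtain ⟨v0, hv0⟩ := Finset.card_eq_one.mp (by rw [hNucard, hd'])
        have hSv : S = G.degree v0 := by rw [hS, hv0, Finset.sum_singleton]
        have hv0n := hΔ v0
        have h11 : d * d = 1 := by rw [hd']
        have hnd : n * d = n := by rw [hd']; ring
        omega
      · -- d = 2
        have he2 : e < 2 * r := by
          by_contra hcon
          push_neg at hcon
          have hall : ∀ w ∈ R, (G.neighborFinset w ∩ Nu).card = 2 := by
            by_contra hex
            push_neg at hex
            obtain ⟨w0, hw0R, hw0ne⟩ := hex
            have hlt : e < ∑ _w ∈ R, 2 :=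
              Finset.sum_lt_sum hw2 ⟨w0, hw0R, lt_of_le_of_ne (hw2 w0 hw0R) hw0ne⟩
            rw [Finset.sum_const, smul_eq_mul] at hlt
            omega
          obtain ⟨wa, hwa, wb, hwb, hwab⟩ := Finset.one_lt_card.mp (by omega : 1 < R.card)
          obtain ⟨v1, v2, hv12, hNu2⟩ := Finset.card_eq_two.mp (by rw [hNucard, hd'])
          have hfull : ∀ w ∈ R, G.neighborFinset w ∩ Nu = Nu := fun w hw =>
            Finset.eq_of_subset_of_card_le Finset.inter_subset_right
              (by rw [hall w hw, hNucard, hd'])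
          have hadj : ∀ w ∈ R, G.Adj v1 w ∧ G.Adj v2 w := by
            intro w hw
            have h1 : v1 ∈ G.neighborFinset w ∩ Nu := by
              rw [hfull w hw, hNu2]; simp
            have h2 : v2 ∈ G.neighborFinset w ∩ Nu := by
              rw [hfull w hw, hNu2]; simp
            constructor
            · have := (Finset.mem_inter.mp h1).1
              rw [SimpleGraph.mem_neighborFinset] at this
              exact this.symm
            · have := (Finset.mem_inter.mp h2).1
              rw [SimpleGraph.mem_neighborFinset] at this
              exact this.symm
          have hv1u : G.Adj v1 u := by
            have : v1 ∈ Nu := by rw [hNu2]; simp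
            rw [hNu, SimpleGraph.mem_neighborFinset] at this
            exact this.symm
          have hv2u : G.Adj v2 u := by
            have : v2 ∈ Nu := by rw [hNu2]; simp
            rw [hNu, SimpleGraph.mem_neighborFinset] at this
            exact this.symm
          have hua : u ≠ wa := Ne.symm (hRu wa hwa).1
          have hub : u ≠ wb := Ne.symm (hRu wb hwb).1
          exact hK23 v1 v2 u wa wb hv12 hua hub hwab hv1u (hadj wa hwa).1 (hadj wb hwb).1
            hv2u (hadj wa hwa).2 (hadj wb hwb).2
        have h22 : d * d = 4 := by rw [hd']
        have hnd : n * d = 2 * n := by rw [hd']; ring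
        omega
      · -- 3 ≤ d
        have h2r : 2 * r < r * d := by
          have : r * 2 < r * d := Nat.mul_lt_mul_of_le_of_lt (le_refl r) (by omega) (by omega)
          omega
        calc d * d + S ≤ d * d + d + 2 * r := by omega
        _ < d * d + d + r * d := by omega
        _ = n * d := by rw [hnrd]; ring
    -- convert to ℝ
    have hdR : (0:ℝ) < (d:ℝ) := by exact_mod_cast hd1
    have hsumcast : ∑ v ∈ Nu, (G.degree v : ℝ) = (S:ℝ) := by
      rw [hS]; push_cast; rfl
    have heta : eta G u = ((d * d + S : ℕ) : ℝ) / (d:ℝ) := by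
      rw [eta, ← hd, ← hNu, hsumcast]
      push_cast
      field_simp
    rw [heta, div_lt_iff₀ hdR]
    exact_mod_cast key

end Eta

section Struct
variable {V : Type*} [Fintype V]

lemma exists_adj (G : SimpleGraph V) (hconn : G.Connected) (h2 : 2 ≤ Fintype.card V) (v : V) :
    ∃ w, G.Adj v w := by
  obtain ⟨w, hw⟩ := Fintype.exists_ne_of_one_lt_card (by omega) v
  obtain ⟨p⟩ := hconn.preconnected v w
  cases p with
  | nil => exact absurd rfl hw
  | cons h q => exact ⟨_, h⟩

lemma exists_ne3 (h4 : 4 ≤ Fintype.card V) (a b c : V) : ∃ z, z ≠ a ∧ z ≠ b ∧ z ≠ c := by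
  by_contra hcon
  push_neg at hcon
  have hsub : (Finset.univ : Finset V) ⊆ {a, b, c} := by
    intro x _
    simp only [Finset.mem_insert, Finset.mem_singleton]
    rcases eq_or_ne x a with h | h
    · exact Or.inl h
    rcases eq_or_ne x b with h' | h'
    · exact Or.inr (Or.inl h')
    · exact Or.inr (Or.inr (hcon x h h'))
  have h1 := Finset.card_le_card hsub
  rw [Finset.card_univ] at h1
  have h2 : ({a, b, c} : Finset V).card ≤ 3 := by
    refine le_trans (Finset.card_insert_le _ _) ?_
    have := Finset.card_insert_le b ({c} : Finset V)
    simp only [Finset.card_singleton] at this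
    omega
  omega

lemma exists_P3 (G : SimpleGraph V) (hconn : G.Connected) (h3 : 3 ≤ Fintype.card V) :
    ∃ a b c : V, G.Adj b a ∧ G.Adj b c ∧ a ≠ c := by
  obtain ⟨v0⟩ : Nonempty V := Fintype.card_pos_iff.mp (by omega)
  obtain ⟨v1, hv1⟩ := exists_adj G hconn (by omega) v0
  have hex : ∃ v2, v2 ≠ v0 ∧ v2 ≠ v1 := by
    by_contra hcon
    push_neg at hcon
    have hsub : (Finset.univ : Finset V) ⊆ {v0, v1} := by
      intro x _
      simp only [Finset.mem_insert, Finset.mem_singleton]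
      rcases eq_or_ne x v0 with h | h
      · exact Or.inl h
      · exact Or.inr (hcon x h)
    have h1 := Finset.card_le_card hsub
    rw [Finset.card_univ] at h1
    have h2 : ({v0, v1} : Finset V).card ≤ 2 := by
      refine le_trans (Finset.card_insert_le _ _) ?_
      simp
    omega
  obtain ⟨v2, h20, h21⟩ := hex
  obtain ⟨p0⟩ := hconn.preconnected v0 v2
  obtain ⟨w, hw⟩ := p0.toPath
  cases w with
  | nil => exact absurd rfl h20
  | cons h q =>
    rename_i y
    cases q with
    | nil => exact ⟨v1, v0, v2, hv1, h, Ne.symm h21⟩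
    | cons h' q' =>
      rename_i z
      have hnd := hw.support_nodup
      rw [SimpleGraph.Walk.support_cons, List.nodup_cons] at hnd
      have hv0 : v0 ∉ (SimpleGraph.Walk.cons h' q').support := hnd.1
      have hz : z ∈ (SimpleGraph.Walk.cons h' q').support := by
        rw [SimpleGraph.Walk.support_cons]
        exact List.mem_cons_of_mem _ q'.start_mem_support
      exact ⟨v0, y, z, h.symm, h', fun he => hv0 (he ▸ hz)⟩

lemma star_of_P4free (G : SimpleGraph V) (hconn : G.Connected) (h5 : 5 ≤ Fintype.card V)
    (hP4 : ∀ a b c d : V, G.Adj a b → G.Adj b c → G.Adj c d → a ≠ c → b ≠ d → a ≠ d → False) :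
    ∃ u : V, (∀ v, v ≠ u → G.Adj u v) ∧ ∀ a b, G.Adj a b → a = u ∨ b = u := by
  obtain ⟨a, b, c, hba, hbc, hac⟩ := exists_P3 G hconn (by omega)
  have hstar : ∀ x, x ≠ b → G.Adj b x := by
    intro x hxb
    by_contra hnadj
    obtain ⟨p0⟩ := hconn.preconnected x b
    obtain ⟨w, hw⟩ := p0.toPath
    cases w with
    | nil => exact hxb rfl
    | cons h q =>
      rename_i y
      cases q with
      | nil => exact hnadj h.symm
      | cons h' q' =>
        rename_i z
        cases q' with
        | nil =>
          -- x - y - b with h : Adj x y, h' : Adj y b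
          by_cases hya : y = a
          · subst hya
            exact hP4 x y b c h hba.symm hbc hxb hac (fun he => hnadj (he ▸ hbc))
          · exact hP4 x y b a h h' hba hxb hya (fun he => hnadj (he ▸ hba))
        | cons h'' q'' =>
          rename_i t
          have hnd := hw.support_nodup
          simp only [SimpleGraph.Walk.support_cons, List.nodup_cons, List.mem_cons] at hnd
          have hxy : x ≠ y := fun he => hnd.1 (Or.inl he)
          have hxz : x ≠ z := fun he => hnd.1 (Or.inr (Or.inl he))
          have hxt : x ≠ t := fun he => hnd.1 (Or.inr (Or.inr (he ▸ q''.start_mem_support)))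
          have hyt : y ≠ t := fun he => hnd.2.1 (Or.inr (he ▸ q''.start_mem_support))
          exact hP4 x y z t h h' h'' hxz hyt hxt
  refine ⟨b, fun v hv => hstar v hv, ?_⟩
  intro v w hvw
  by_contra hcon
  push_neg at hcon
  obtain ⟨hvb, hwb⟩ := hcon
  obtain ⟨z, hz1, hz2, hz3⟩ := exists_ne3 (by omega) b v w
  exact hP4 z b v w (hstar z hz1).symm (hstar v hvb) hvw hz2 (Ne.symm hwb) hz3

lemma star_of_2P2free (G : SimpleGraph V) (hconn : G.Connected) (h5 : 5 ≤ Fintype.card V)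
    (h2 : ∀ a b c d : V, G.Adj a b → G.Adj c d → a ≠ c → a ≠ d → b ≠ c → b ≠ d → False) :
    ∃ u : V, (∀ v, v ≠ u → G.Adj u v) ∧ ∀ a b, G.Adj a b → a = u ∨ b = u := by
  obtain ⟨a, b, c, hba, hbc, hac⟩ := exists_P3 G hconn (by omega)
  by_cases hadj : G.Adj a c
  · exfalso
    obtain ⟨z, hz1, hz2, hz3⟩ := exists_ne3 (by omega) a b c
    obtain ⟨t, ht⟩ := exists_adj G hconn (by omega) z
    have hAB : t = a ∨ t = b := by
      by_contra hc; push_neg at hc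
      exact h2 z t a b ht hba.symm hz1 hz2 hc.1 hc.2
    have hBC : t = b ∨ t = c := by
      by_contra hc; push_neg at hc
      exact h2 z t b c ht hbc hz2 hz3 hc.1 hc.2
    have hAC : t = a ∨ t = c := by
      by_contra hc; push_neg at hc
      exact h2 z t a c ht hadj hz1 hz3 hc.1 hc.2
    rcases hAB with h | h
    · rcases hBC with h' | h'
      · exact hba.ne (h'.symm.trans h)
      · exact hac (h.symm.trans h')
    · rcases hAC with h' | h'
      · exact hba.ne (h.symm.trans h')
      · exact hbc.ne (h.symm.trans h')
  · have hedge : ∀ v w, G.Adj v w → v = b ∨ w = b := by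
      intro v w hvw
      by_contra hc; push_neg at hc
      have hA : v = a ∨ w = a := by
        by_contra hc2; push_neg at hc2
        exact h2 v w b a hvw hba hc.1 hc2.1 hc.2 hc2.2
      have hC : v = c ∨ w = c := by
        by_contra hc2; push_neg at hc2
        exact h2 v w b c hvw hbc hc.1 hc2.1 hc.2 hc2.2
      rcases hA with h1 | h1 <;> rcases hC with h3 | h3
      · exact hac (h1.symm.trans h3)
      · exact hadj (by rw [← h1, ← h3]; exact hvw)
      · have hca : G.Adj c a := by rw [← h3, ← h1]; exact hvw
        exact hadj hca.symm
      · exact hac (h1.symm.trans h3)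
    have hstar : ∀ v, v ≠ b → G.Adj b v := by
      intro v hvb
      obtain ⟨t, ht⟩ := exists_adj G hconn (by omega) v
      rcases hedge v t ht with h | h
      · exact absurd h hvb
      · exact (h ▸ ht).symm
    exact ⟨b, fun v hv => hstar v hv, hedge⟩

end Struct

section Copy

lemma containsCopy_of_iso {α β γ : Type*} {G : SimpleGraph α} {F : SimpleGraph β}
    {F' : SimpleGraph γ} (e : F ≃g F') (h : ContainsCopy G F') : ContainsCopy G F := by
  obtain ⟨f, finj, hf⟩ := h
  exact ⟨f ∘ e, finj.comp e.toEquiv.injective, fun a b hab => hf _ _ (e.map_adj_iff.mpr hab)⟩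

lemma P4_free_aux {V W : Type*} {G : SimpleGraph V} {F : SimpleGraph W}
    (e : F ≃g SimpleGraph.pathGraph 4) (hfree : ¬ ContainsCopy G F) :
    ∀ a b c d : V, G.Adj a b → G.Adj b c → G.Adj c d → a ≠ c → b ≠ d → a ≠ d → False := by
  intro a b c d h1 h2 h3 hac hbd had
  apply hfree
  apply containsCopy_of_iso e
  have hab := h1.ne
  have hbc := h2.ne
  have hcd := h3.ne
  refine ⟨![a, b, c, d], ?_, ?_⟩
  · intro i j hij
    fin_cases i <;> fin_cases j <;> simp_all
  · intro i j hij
    rw [SimpleGraph.pathGraph_adj] at hij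
    fin_cases i <;> fin_cases j <;> simp_all <;>
      first | exact h1 | exact h1.symm | exact h2 | exact h2.symm | exact h3 | exact h3.symm

lemma twoP2_free_aux {V W : Type*} {G : SimpleGraph V} {F : SimpleGraph W}
    (e : F ≃g pathUnion 2 2) (hfree : ¬ ContainsCopy G F) :
    ∀ a b c d : V, G.Adj a b → G.Adj c d → a ≠ c → a ≠ d → b ≠ c → b ≠ d → False := by
  intro a b c d h1 h2 hac had hbc hbd
  apply hfree
  apply containsCopy_of_iso e
  have hab := h1.ne
  have hcd := h2.ne
  refine ⟨fun p => if p.1 = 0 then (if p.2 = 0 then a else b) else (if p.2 = 0 then c else d),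
    ?_, ?_⟩
  · rintro ⟨p1, p2⟩ ⟨q1, q2⟩ hpq
    fin_cases p1 <;> fin_cases p2 <;> fin_cases q1 <;> fin_cases q2 <;> simp_all
  · rintro ⟨p1, p2⟩ ⟨q1, q2⟩ hadj
    obtain ⟨heq, hpath⟩ := hadj
    rw [SimpleGraph.pathGraph_adj] at hpath
    fin_cases p1 <;> fin_cases q1 <;> fin_cases p2 <;> fin_cases q2 <;> simp_all <;>
      first | exact h1 | exact h1.symm | exact h2 | exact h2.symm

lemma triangle_free_aux {V W : Type*} {G : SimpleGraph V} {F : SimpleGraph W}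
    (e : F ≃g SimpleGraph.cycleGraph 3) (hfree : ¬ ContainsCopy G F) :
    ∀ a b c : V, G.Adj a b → G.Adj b c → G.Adj a c → False := by
  intro a b c h1 h2 h3
  apply hfree
  apply containsCopy_of_iso e
  have hab := h1.ne
  have hbc := h2.ne
  have hac := h3.ne
  refine ⟨![a, b, c], ?_, ?_⟩
  · intro i j hij
    fin_cases i <;> fin_cases j <;> simp_all
  · intro i j hij
    rw [SimpleGraph.cycleGraph_three_eq_top, SimpleGraph.top_adj] at hij
    fin_cases i <;> fin_cases j <;> simp_all <;>
      first | exact h1 | exact h1.symm | exact h2 | exact h2.symm | exact h3 | exact h3.symm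

lemma starG_C3_free {V W : Type*} {F : SimpleGraph W} (u : V)
    (e : F ≃g SimpleGraph.cycleGraph 3) : ¬ ContainsCopy (starG u) F := by
  intro h
  obtain ⟨g, ginj, gadj⟩ := containsCopy_of_iso e.symm h
  have hadj : ∀ i j : Fin 3, i ≠ j → (starG u).Adj (g i) (g j) := by
    intro i j hij
    exact gadj i j (by rw [SimpleGraph.cycleGraph_three_eq_top, SimpleGraph.top_adj]; exact hij)
  exact starG_triangle_free (g 0) (g 1) (g 2)
    (hadj 0 1 (by decide)) (hadj 1 2 (by decide)) (hadj 0 2 (by decide))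

lemma star_iso {V : Type*} [Fintype V] {G : SimpleGraph V} {n : ℕ}
    (hcard : Fintype.card V = n) (hn : 1 ≤ n) (u : V)
    (hu : ∀ v, v ≠ u → G.Adj u v) (hedge : ∀ a b, G.Adj a b → a = u ∨ b = u) :
    Nonempty (G ≃g completeBipartiteGraph (Fin 1) (Fin (n - 1))) := by
  have hsub : Fintype.card {v : V // v ≠ u} = n - 1 := by
    rw [Fintype.card_subtype_compl, Fintype.card_subtype_eq, hcard]
  let g : {v : V // v ≠ u} ≃ Fin (n - 1) := Fintype.equivFinOfCardEq hsub
  let φ : V ≃ (Fin 1 ⊕ Fin (n - 1)) :=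
    { toFun := fun v => if h : v = u then Sum.inl 0 else Sum.inr (g ⟨v, h⟩)
      invFun := fun s => Sum.elim (fun _ => u) (fun i => (g.symm i).1) s
      left_inv := by
        intro v
        by_cases h : v = u
        · simp [h]
        · simp [h]
      right_inv := by
        rintro (i | j)
        · simp [Fin.fin_one_eq_zero i]
        · have hne := (g.symm j).2
          simp [hne] }
  refine ⟨⟨φ, ?_⟩⟩
  intro a b
  simp only [completeBipartiteGraph_adj]
  by_cases ha : a = u <;> by_cases hb : b = u
  · subst ha; subst hb
    simp only [φ, Equiv.coe_fn_mk, dif_pos rfl]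
    simp
  · subst ha
    simp only [φ, Equiv.coe_fn_mk, dif_pos rfl, dif_neg hb]
    simp only [Sum.isLeft_inl, Sum.isRight_inr, Sum.isRight_inl, Sum.isLeft_inr]
    constructor
    · intro _; exact hu b hb
    · intro _; simp
  · subst hb
    simp only [φ, Equiv.coe_fn_mk, dif_pos rfl, dif_neg ha]
    simp only [Sum.isLeft_inl, Sum.isRight_inr, Sum.isRight_inl, Sum.isLeft_inr]
    constructor
    · intro _; exact (hu a ha).symm
    · intro _; simp
  · simp only [φ, Equiv.coe_fn_mk, dif_neg ha, dif_neg hb]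
    simp only [Sum.isLeft_inr, Sum.isRight_inr]
    constructor
    · intro h; simp at h
    · intro h
      rcases hedge a b h with h' | h'
      · exact absurd h' ha
      · exact absurd h' hb

end Copy

/-- For `F ∈ {P₄, 2P₂, C₃}` and `n ≥ 5`, the unique maximizer of the `Q`-index among
connected `F`-free outerplanar graphs of order `n` is the star `K_{1,n-1}`. -/
theorem star_maximizes_small_cases
    {V W : Type*} [Fintype V] [Fintype W] {n : ℕ} (hn : 5 ≤ n)
    (F : SimpleGraph W)
    (hF : Nonempty (F ≃g SimpleGraph.pathGraph 4) ∨
      Nonempty (F ≃g pathUnion 2 2) ∨ Nonempty (F ≃g SimpleGraph.cycleGraph 3))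
    (G : SimpleGraph V) (hcard : Fintype.card V = n)
    (hconn : G.Connected) (hout : IsOuterplanar G) (hfree : ¬ ContainsCopy G F)
    (hmax : ∀ H : SimpleGraph V, H.Connected → IsOuterplanar H → ¬ ContainsCopy H F →
      qIndex H ≤ qIndex G) :
    Nonempty (G ≃g completeBipartiteGraph (Fin 1) (Fin (n - 1))) := by
  haveI : Nonempty V := Fintype.card_pos_iff.mp (by omega)
  have hcard5 : 5 ≤ Fintype.card V := by omega
  have hn1 : 1 ≤ n := by omega
  have finish : (∃ u : V, (∀ v, v ≠ u → G.Adj u v) ∧ ∀ a b, G.Adj a b → a = u ∨ b = u) →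
      Nonempty (G ≃g completeBipartiteGraph (Fin 1) (Fin (n - 1))) := by
    rintro ⟨u, hu, hedge⟩
    exact star_iso hcard hn1 u hu hedge
  rcases hF with hF1 | hF1 | hF1
  · obtain ⟨e⟩ := hF1
    exact finish (star_of_P4free G hconn (by omega) (P4_free_aux e hfree))
  · obtain ⟨e⟩ := hF1
    exact finish (star_of_2P2free G hconn (by omega) (twoP2_free_aux e hfree))
  · obtain ⟨e⟩ := hF1
    have htf := triangle_free_aux e hfree
    have hK23 : ∀ v1 v2 w1 w2 w3 : V, v1 ≠ v2 → w1 ≠ w2 → w1 ≠ w3 → w2 ≠ w3 →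
        G.Adj v1 w1 → G.Adj v1 w2 → G.Adj v1 w3 →
        G.Adj v2 w1 → G.Adj v2 w2 → G.Adj v2 w3 → False :=
      fun v1 v2 w1 w2 w3 hv h12 h13 h23 a11 a12 a13 a21 a22 a23 =>
        no_K23_of_outerplanar hout hv h12 h13 h23 a11 a12 a13 a21 a22 a23
    by_cases hbig : ∃ u, G.degree u = n - 1
    · obtain ⟨u, hu⟩ := hbig
      have hadj : ∀ v, v ≠ u → G.Adj u v := by
        have hsubs : G.neighborFinset u ⊆ Finset.univ.erase u := by
          intro w hw
          rw [Finset.mem_erase]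
          exact ⟨fun he => G.notMem_neighborFinset_self u (he ▸ hw), Finset.mem_univ _⟩
        have hcards : (Finset.univ.erase u).card ≤ (G.neighborFinset u).card := by
          rw [Finset.card_erase_of_mem (Finset.mem_univ u), Finset.card_univ, hcard,
            SimpleGraph.card_neighborFinset_eq_degree, hu]
        have heq := Finset.eq_of_subset_of_card_le hsubs hcards
        intro v hv
        have hmem : v ∈ G.neighborFinset u := by
          rw [heq, Finset.mem_erase]
          exact ⟨hv, Finset.mem_univ _⟩
        rwa [SimpleGraph.mem_neighborFinset] at hmem
      have hedge : ∀ a b, G.Adj a b → a = u ∨ b = u := by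
        intro a b hab
        by_contra hc
        push_neg at hc
        exact htf u a b (hadj a hc.1) hab (hadj b hc.2)
      exact finish ⟨u, hadj, hedge⟩
    · push_neg at hbig
      exfalso
      have hΔ : ∀ v, G.degree v ≤ n - 2 := by
        intro v
        have h1 : G.degree v < Fintype.card V := G.degree_lt_card_verts v
        have h2 := hbig v
        omega
      have hdegpos : ∀ v, 0 < G.degree v := by
        intro v
        obtain ⟨w, hw⟩ := exists_adj G hconn (by omega) v
        rw [← SimpleGraph.card_neighborFinset_eq_degree]
        refine Finset.card_pos.mpr ⟨w, ?_⟩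
        rw [SimpleGraph.mem_neighborFinset]
        exact hw
      have hetalt : ∀ v, eta G v < n := eta_lt_card G hcard hn htf hK23 hΔ
      obtain ⟨u0, -, hu0⟩ := Finset.exists_max_image Finset.univ (eta G)
        ⟨Classical.arbitrary V, Finset.mem_univ _⟩
      have hq1 : qIndex G ≤ eta G u0 := by
        apply Real.sSup_le
        · rintro μ ⟨x, hx, he⟩
          exact eig_le_eta G hdegpos hx he (fun v => hu0 v (Finset.mem_univ v))
        · exact eta_nonneg G u0
      have hq2 : (n:ℝ) ≤ qIndex G := by
        have hs := hmax (starG (Classical.arbitrary V)) (starG_connected _)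
          (starG_outerplanar _) (starG_C3_free _ e)
        have hge := starG_qIndex_ge (Classical.arbitrary V) hcard5
        rw [hcard] at hge
        linarith
      have hlt := hetalt u0
      linarith
end OuterplanarQ
end

section
/- Let G be a connected finite simple graph with vertices u, v, w such that uw ∉ E(G) and vw ∈ E(G), and let x be the Perron vector of G. If x_u ≥ x_v, then q(G − vw + uw) > q(G), where G − vw + uw is the graph obtained from G by deleting the edge vw and adding the edge uw. -/
open scoped Classical

namespace OuterplanarQ
set_option maxHeartbeats 1000000
set_option synthInstance.maxHeartbeats 400000
set_option linter.unusedSectionVars false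
set_option linter.unnecessarySimpa false

section SpecAux


variable {V : Type*} [Fintype V]

noncomputable def specSup (M : Matrix V V ℝ) : ℝ :=
  sSup {μ : ℝ | ∃ x : V → ℝ, x ≠ 0 ∧ M.mulVec x = μ • x}

noncomputable def toE (y : V → ℝ) : EuclideanSpace ℝ V := (WithLp.equiv 2 (V → ℝ)).symm y

@[simp] lemma toE_apply (y : V → ℝ) (i : V) : toE y i = y i := rfl

lemma toE_ne_zero {y : V → ℝ} (h : y ≠ 0) : toE y ≠ 0 := by
  intro hz
  exact h ((WithLp.equiv 2 (V → ℝ)).symm.injective (by simpa [toE] using hz))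

noncomputable def lam (M : Matrix V V ℝ) : ℝ :=
  ⨆ x : { x : EuclideanSpace ℝ V // x ≠ 0 },
    RCLike.re (K := ℝ) (inner ℝ ((Matrix.toEuclideanLin M) (x : EuclideanSpace ℝ V)) (x : EuclideanSpace ℝ V))
      / ‖(x : EuclideanSpace ℝ V)‖ ^ 2

lemma inner_euclidean (a b : EuclideanSpace ℝ V) :
    (inner ℝ a b : ℝ) = ∑ i, a i * b i := by
  simp [PiLp.inner_apply, RCLike.inner_apply, mul_comm]

lemma toEuclideanLin_apply' (M : Matrix V V ℝ) (y : EuclideanSpace ℝ V) (i : V) :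
    (Matrix.toEuclideanLin M) y i = M.mulVec (fun j => y j) i := rfl

lemma norm_sq_euclidean (y : EuclideanSpace ℝ V) : ‖y‖ ^ 2 = ∑ i, y i ^ 2 := by
  rw [← real_inner_self_eq_norm_sq, inner_euclidean]
  simp [sq]

lemma rayleigh_bddAbove (M : Matrix V V ℝ) :
    BddAbove (Set.range fun x : { x : EuclideanSpace ℝ V // x ≠ 0 } =>
      RCLike.re (K := ℝ) (inner ℝ ((Matrix.toEuclideanLin M) (x : EuclideanSpace ℝ V)) (x : EuclideanSpace ℝ V))
        / ‖(x : EuclideanSpace ℝ V)‖ ^ 2) := by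
  set T := Matrix.toEuclideanLin M
  set Tc := LinearMap.toContinuousLinearMap T with hTc
  refine ⟨‖Tc‖, ?_⟩
  rintro r ⟨⟨y, hy⟩, rfl⟩
  have hny : ‖y‖ ≠ 0 := norm_ne_zero_iff.mpr hy
  have hpos : (0:ℝ) < ‖y‖ ^ 2 := by positivity
  have h1 : (inner ℝ (T y) y : ℝ) ≤ ‖T y‖ * ‖y‖ := real_inner_le_norm _ _
  have h2 : ‖T y‖ ≤ ‖Tc‖ * ‖y‖ := by
    have := Tc.le_opNorm y
    simpa [hTc] using this
  have h3 : (inner ℝ (T y) y : ℝ) ≤ ‖Tc‖ * ‖y‖ ^ 2 := by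
    nlinarith [norm_nonneg y, norm_nonneg (T y)]
  simp only [RCLike.re_to_real]
  rw [div_le_iff₀ hpos]
  simpa using h3

variable [Nonempty V]

lemma specSup_eq_lam {M : Matrix V V ℝ} (hM : M.IsHermitian) : specSup M = lam M := by
  have hsym : (Matrix.toEuclideanLin M).IsSymmetric := Matrix.isHermitian_iff_isSymmetric.mp hM
  have hmem : lam M ∈ {μ : ℝ | ∃ x : V → ℝ, x ≠ 0 ∧ M.mulVec x = μ • x} := by
    have h1 := hsym.hasEigenvalue_iSup_of_finiteDimensional
    obtain ⟨y, hy⟩ := h1.exists_hasEigenvector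
    refine ⟨fun i => y i, ?_, ?_⟩
    · intro h0
      exact hy.2 (WithLp.ofLp_injective 2 (funext fun i => congrFun h0 i))
    · have := hy.apply_eq_smul
      funext i
      have hi := congrFun (congrArg (fun z : EuclideanSpace ℝ V => (fun j => z j)) this) i
      simpa [toEuclideanLin_apply', lam] using hi
  have hle : ∀ μ ∈ {μ : ℝ | ∃ x : V → ℝ, x ≠ 0 ∧ M.mulVec x = μ • x}, μ ≤ lam M := by
    rintro μ ⟨y, hy0, hy⟩
    have hy0' : toE y ≠ 0 := toE_ne_zero hy0
    have hsum : (0:ℝ) < ∑ i, y i ^ 2 := by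
      have h1 : ‖toE y‖ ^ 2 = ∑ i, y i ^ 2 := by
        rw [norm_sq_euclidean]; simp
      have h2 : ‖toE y‖ ≠ 0 := norm_ne_zero_iff.mpr hy0'
      have h3 : (0:ℝ) < ‖toE y‖ ^ 2 := by positivity
      linarith
    have hval : (RCLike.re (K := ℝ) (inner ℝ ((Matrix.toEuclideanLin M) (toE y)) (toE y))
        / ‖toE y‖ ^ 2) = μ := by
      have h2 : (inner ℝ ((Matrix.toEuclideanLin M) (toE y)) (toE y) : ℝ)
          = μ * ∑ i, y i ^ 2 := by
        rw [inner_euclidean]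
        simp only [toEuclideanLin_apply', toE_apply]
        have : M.mulVec (fun j => y j) = μ • y := by simpa using hy
        rw [this]
        simp [Finset.mul_sum, sq, mul_assoc]
      rw [RCLike.re_to_real, h2, norm_sq_euclidean]
      simp only [toE_apply]
      field_simp
    calc μ = _ := hval.symm
      _ ≤ lam M := le_ciSup (rayleigh_bddAbove M) ⟨toE y, hy0'⟩
  refine le_antisymm (csSup_le ⟨lam M, hmem⟩ hle) (le_csSup ⟨lam M, hle⟩ hmem)

lemma rayleigh_le_specSup {M : Matrix V V ℝ} (hM : M.IsHermitian) {y : V → ℝ}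
    (hy : ∑ i, y i ^ 2 = 1) : ∑ i, M.mulVec y i * y i ≤ specSup M := by
  have hy0 : y ≠ 0 := by
    intro h
    rw [h] at hy
    simpa using hy
  have hy0' : toE y ≠ 0 := toE_ne_zero hy0
  rw [specSup_eq_lam hM]
  have hle := le_ciSup (rayleigh_bddAbove M) (⟨toE y, hy0'⟩ : { x : EuclideanSpace ℝ V // x ≠ 0 })
  have hnorm : ‖toE y‖ ^ 2 = 1 := by
    rw [norm_sq_euclidean]; simpa using hy
  calc ∑ i, M.mulVec y i * y i
      = RCLike.re (K := ℝ) (inner ℝ ((Matrix.toEuclideanLin M) (toE y)) (toE y)) / ‖toE y‖ ^ 2 := by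
        rw [RCLike.re_to_real, inner_euclidean, hnorm, div_one]
        simp [toEuclideanLin_apply']
    _ ≤ lam M := hle

lemma eigen_of_max {M : Matrix V V ℝ} (hM : M.IsHermitian) {y : V → ℝ}
    (hy : ∑ i, y i ^ 2 = 1) (h : specSup M ≤ ∑ i, M.mulVec y i * y i) :
    M.mulVec y = specSup M • y := by
  have hsym : (Matrix.toEuclideanLin M).IsSymmetric := Matrix.isHermitian_iff_isSymmetric.mp hM
  set T' := hsym.toSelfAdjoint with hT'
  have hy0 : y ≠ 0 := by
    intro hz; rw [hz] at hy; simpa using hy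
  have hy0' : toE y ≠ 0 := toE_ne_zero hy0
  have hn2 : ‖toE y‖ ^ 2 = 1 := by rw [norm_sq_euclidean]; simpa using hy
  have hnorm : ‖toE y‖ = 1 := by
    have h0 : (0:ℝ) ≤ ‖toE y‖ := norm_nonneg _
    nlinarith
  have heq : ∑ i, M.mulVec y i * y i = specSup M :=
    le_antisymm (rayleigh_le_specSup hM hy) h
  have hray : ∀ z : EuclideanSpace ℝ V,
      T'.val.reApplyInnerSelf z = (inner ℝ ((Matrix.toEuclideanLin M) z) z : ℝ) := by
    intro z
    have : T'.val z = (Matrix.toEuclideanLin M) z := hsym.toSelfAdjoint_apply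
    simp [ContinuousLinearMap.reApplyInnerSelf, this]
  have hvaly : (inner ℝ ((Matrix.toEuclideanLin M) (toE y)) (toE y) : ℝ) = specSup M := by
    rw [inner_euclidean]
    simpa [toEuclideanLin_apply'] using heq
  have hextr : IsMaxOn T'.val.reApplyInnerSelf (Metric.sphere (0 : EuclideanSpace ℝ V) ‖toE y‖) (toE y) := by
    intro z hz
    have hz1 : ‖z‖ = 1 := by simpa [hnorm] using hz
    have hz0 : z ≠ 0 := by
      intro h0; rw [h0] at hz1; simp at hz1
    have hle := le_ciSup (rayleigh_bddAbove M) (⟨z, hz0⟩ : { x : EuclideanSpace ℝ V // x ≠ 0 })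
    have hzle : (inner ℝ ((Matrix.toEuclideanLin M) z) z : ℝ) ≤ lam M := by
      simpa [hz1, lam] using hle
    simp only [Set.mem_setOf_eq, hray]
    rw [hvaly, specSup_eq_lam hM]
    exact hzle
  have hev := T'.prop.hasEigenvector_of_isMaxOn hy0' hextr
  have happ := hev.apply_eq_smul
  have hlam : (⨆ x : { x : EuclideanSpace ℝ V // x ≠ 0 }, T'.val.rayleighQuotient x) = lam M := by
    refine iSup_congr fun x => ?_
    simp [ContinuousLinearMap.rayleighQuotient, ContinuousLinearMap.reApplyInnerSelf,
      hsym.toSelfAdjoint_apply]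
    rfl
  have hcoe : ∀ z, ((T'.val : EuclideanSpace ℝ V →L[ℝ] EuclideanSpace ℝ V) : EuclideanSpace ℝ V →ₗ[ℝ] EuclideanSpace ℝ V) z = (Matrix.toEuclideanLin M) z :=
    fun z => hsym.toSelfAdjoint_apply
  funext i
  have hi := congrFun (congrArg (fun z : EuclideanSpace ℝ V => (fun j => z j)) happ) i
  rw [show ((T'.val : EuclideanSpace ℝ V →L[ℝ] EuclideanSpace ℝ V) : EuclideanSpace ℝ V →ₗ[ℝ] EuclideanSpace ℝ V) (toE y) = (Matrix.toEuclideanLin M) (toE y) from congrFun (congrArg _ hsym.coe_toSelfAdjoint) _] at hi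
  rw [hlam] at hi
  simpa [toEuclideanLin_apply', specSup_eq_lam hM] using hi



end SpecAux

section GraphAux


variable {V : Type*} [Fintype V]

lemma qMatrix_isHermitian (H : SimpleGraph V) : (qMatrix H).IsHermitian := by
  ext i j
  simp only [Matrix.conjTranspose_apply, qMatrix, star_trivial]
  by_cases h : i = j
  · subst h; simp
  · simp only [h, Ne.symm h, if_false]
    rw [SimpleGraph.adj_comm]

lemma degree_eq_sum (H : SimpleGraph V) (i : V) :
    (H.degree i : ℝ) = ∑ j, (if H.Adj i j then (1:ℝ) else 0) := by
  rw [Finset.sum_boole, SimpleGraph.degree, SimpleGraph.neighborFinset_eq_filter]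

lemma mulVec_qMatrix (H : SimpleGraph V) (y : V → ℝ) (i : V) :
    (qMatrix H).mulVec y i
      = (H.degree i : ℝ) * y i + ∑ j, (if H.Adj i j then (1:ℝ) else 0) * y j := by
  simp [qMatrix, Matrix.mulVec, dotProduct, add_mul, Finset.sum_add_distrib,
    ite_mul, Finset.sum_ite_eq]

lemma rayleighSum (H : SimpleGraph V) (y : V → ℝ) :
    ∑ i, (qMatrix H).mulVec y i * y i
      = ∑ i, ∑ j, (if H.Adj i j then (1:ℝ) else 0) * (y i ^ 2 + y i * y j) := by
  refine Finset.sum_congr rfl fun i _ => ?_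
  rw [mulVec_qMatrix, degree_eq_sum, add_mul, Finset.sum_mul, Finset.sum_mul, Finset.sum_mul]
  rw [← Finset.sum_add_distrib]
  refine Finset.sum_congr rfl fun j _ => ?_
  ring

lemma sumInd (a b : V) (hab : a ≠ b) (e : V → V → ℝ) :
    ∑ i, ∑ j, (if (i=a∧j=b)∨(i=b∧j=a) then (1:ℝ) else 0) * e i j = e a b + e b a := by
  have key : ∀ i j, (if (i=a∧j=b)∨(i=b∧j=a) then (1:ℝ) else 0) * e i j
      = (if i=a then (if j=b then e i j else 0) else 0)
        + (if i=b then (if j=a then e i j else 0) else 0) := by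
    intro i j
    by_cases h1 : i=a <;> by_cases h2 : j=b <;> by_cases h3 : i=b <;> by_cases h4 : j=a <;>
      simp_all
  simp only [key, Finset.sum_add_distrib]
  simp [Finset.sum_ite_eq, Finset.sum_ite_eq']

lemma adjInd (G : SimpleGraph V) (u v w : V)
    (huw : ¬ G.Adj u w) (hne : u ≠ w) (hvw : G.Adj v w) (huv : u ≠ v) (i j : V) :
    (if (addEdge (delEdge G v w) u w).Adj i j then (1:ℝ) else 0)
      = (if G.Adj i j then 1 else 0)
        + (if (i=u∧j=w)∨(i=w∧j=u) then 1 else 0)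
        - (if (i=v∧j=w)∨(i=w∧j=v) then 1 else 0) := by
  have hwv : v ≠ w := hvw.ne
  have hadj : (addEdge (delEdge G v w) u w).Adj i j ↔
      ((G.Adj i j ∧ ¬(s(i,j) = s(v,w))) ∨ (s(i,j) = s(u,w) ∧ i ≠ j)) := by
    simp [addEdge, delEdge, SimpleGraph.deleteEdges_adj, SimpleGraph.fromEdgeSet_adj]
  by_cases h1 : (i=u∧j=w)∨(i=w∧j=u)
  · by_cases h2 : (i=v∧j=w)∨(i=w∧j=v)
    · exfalso
      rcases h1 with ⟨rfl,rfl⟩|⟨rfl,rfl⟩ <;> rcases h2 with ⟨h,h'⟩|⟨h,h'⟩ <;> simp_all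
    · have hGA : ¬ G.Adj i j := by
        rcases h1 with ⟨rfl,rfl⟩|⟨rfl,rfl⟩
        · exact huw
        · exact fun h => huw h.symm
      have hA : (addEdge (delEdge G v w) u w).Adj i j := by
        rw [hadj]
        right
        constructor
        · rcases h1 with ⟨rfl,rfl⟩|⟨rfl,rfl⟩
          · rfl
          · exact Sym2.eq_swap
        · rcases h1 with ⟨rfl,rfl⟩|⟨rfl,rfl⟩
          · exact hne
          · exact Ne.symm hne
      simp [hA, hGA, h1, h2]
  · by_cases h2 : (i=v∧j=w)∨(i=w∧j=v)
    · have hGA : G.Adj i j := by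
        rcases h2 with ⟨rfl,rfl⟩|⟨rfl,rfl⟩
        · exact hvw
        · exact hvw.symm
      have hA : ¬ (addEdge (delEdge G v w) u w).Adj i j := by
        rw [hadj]
        rintro (⟨_, hs⟩ | ⟨hs, _⟩)
        · apply hs
          rcases h2 with ⟨rfl,rfl⟩|⟨rfl,rfl⟩
          · rfl
          · exact Sym2.eq_swap
        · rw [Sym2.eq_iff] at hs
          rcases h2 with ⟨rfl,rfl⟩|⟨rfl,rfl⟩ <;>
            rcases hs with ⟨h,h'⟩|⟨h,h'⟩ <;> simp_all
      simp [hA, hGA, h1, h2]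
    · have hA : (addEdge (delEdge G v w) u w).Adj i j ↔ G.Adj i j := by
        rw [hadj]
        constructor
        · rintro (⟨h, _⟩ | ⟨hs, _⟩)
          · exact h
          · rw [Sym2.eq_iff] at hs
            exact absurd hs h1
        · intro h
          left
          refine ⟨h, fun hs => ?_⟩
          rw [Sym2.eq_iff] at hs
          exact h2 hs
      by_cases h3 : G.Adj i j <;> simp [hA, h1, h2, h3]


end GraphAux

section Main
variable {V : Type*} [Fintype V]

lemma keyDiff (G : SimpleGraph V) (u v w : V)
    (huw : ¬ G.Adj u w) (hne : u ≠ w) (hvw : G.Adj v w) (huv : u ≠ v) (x : V → ℝ) :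
    ∑ i, (qMatrix (addEdge (delEdge G v w) u w)).mulVec x i * x i
      = ∑ i, (qMatrix G).mulVec x i * x i + ((x u + x w) ^ 2 - (x v + x w) ^ 2) := by
  have hwv : v ≠ w := hvw.ne
  rw [rayleighSum, rayleighSum]
  simp only [adjInd G u v w huw hne hvw huv, sub_mul, add_mul, Finset.sum_add_distrib,
    Finset.sum_sub_distrib]
  rw [sumInd u w hne, sumInd v w hwv]
  ring

lemma atU (G : SimpleGraph V) (u v w : V)
    (huw : ¬ G.Adj u w) (hne : u ≠ w) (hvw : G.Adj v w) (huv : u ≠ v) (x : V → ℝ) :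
    (qMatrix (addEdge (delEdge G v w) u w)).mulVec x u
      = (qMatrix G).mulVec x u + x u + x w := by
  rw [mulVec_qMatrix, mulVec_qMatrix, degree_eq_sum, degree_eq_sum]
  simp only [adjInd G u v w huw hne hvw huv, sub_mul, add_mul, Finset.sum_add_distrib,
    Finset.sum_sub_distrib]
  simp [hne, huv, ite_mul, Finset.sum_ite_eq']
  ring

end Main

/-- Edge-rotation lemma via the Perron vector: if `uw ∉ E(G)`, `vw ∈ E(G)` and the
Perron vector of `Q(G)` satisfies `x_u ≥ x_v`, then `q(G - vw + uw) > q(G)`. -/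
theorem qIndex_lt_rotate_of_perron
    {V : Type*} [Fintype V] (G : SimpleGraph V) (hconn : G.Connected)
    (u v w : V) (huw : ¬ G.Adj u w) (hne : u ≠ w) (hvw : G.Adj v w)
    (x : V → ℝ) (hpos : ∀ i : V, 0 < x i) (hunit : ∑ i : V, x i ^ 2 = 1)
    (heig : (qMatrix G).mulVec x = qIndex G • x)
    (hx : x v ≤ x u) :
    qIndex G < qIndex (addEdge (delEdge G v w) u w) := by
  classical
  have hV : Nonempty V := ⟨u⟩
  have huv : u ≠ v := by rintro rfl; exact huw hvw
  have hMG' : (qMatrix (addEdge (delEdge G v w) u w)).IsHermitian :=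
    qMatrix_isHermitian _
  have hqg : qIndex G = specSup (qMatrix G) := rfl
  have hqg' : qIndex (addEdge (delEdge G v w) u w)
      = specSup (qMatrix (addEdge (delEdge G v w) u w)) := rfl
  have hr : ∑ i, (qMatrix G).mulVec x i * x i = qIndex G := by
    rw [heig]
    have : ∑ i, (qIndex G • x) i * x i = qIndex G * ∑ i, x i ^ 2 := by
      rw [Finset.mul_sum]
      refine Finset.sum_congr rfl fun i _ => ?_
      simp [sq]
      ring
    rw [this, hunit, mul_one]
  have hkey : ∑ i, (qMatrix (addEdge (delEdge G v w) u w)).mulVec x i * x i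
      = qIndex G + ((x u + x w) ^ 2 - (x v + x w) ^ 2) := by
    rw [keyDiff G u v w huw hne hvw huv x, hr]
  have hsq : (x v + x w) ^ 2 ≤ (x u + x w) ^ 2 := by
    nlinarith [hpos v, hpos w, hpos u]
  by_contra hcon
  push_neg at hcon
  have h1 : specSup (qMatrix (addEdge (delEdge G v w) u w))
      ≤ ∑ i, (qMatrix (addEdge (delEdge G v w) u w)).mulVec x i * x i := by
    rw [← hqg', hkey]
    linarith
  have h2 := eigen_of_max hMG' hunit h1
  have h3 := congrFun h2 u
  rw [atU G u v w huw hne hvw huv x] at h3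
  have h4 : (qMatrix G).mulVec x u = qIndex G * x u := by
    rw [heig]; simp
  rw [h4] at h3
  have h5 : specSup (qMatrix (addEdge (delEdge G v w) u w)) * x u ≤ qIndex G * x u := by
    have := hcon
    rw [hqg'] at this
    exact mul_le_mul_of_nonneg_right this (hpos u).le
  simp only [Pi.smul_apply, smul_eq_mul] at h3
  nlinarith [hpos u, hpos w]
end OuterplanarQ
end
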